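/- In the discrete VCG combinatorial auction with false-name bids, if every one of the n agents submits an exact-bidding Sybil attack for her valuation, then the allocation selected by VCG achieves optimal real welfare: its real welfare equals the maximum over partitions (S_1,…,S_n) of M of the sum over i of v_i(S_i). -/

import Mathlib

/-- The set of nature states on which two actions `a`, `a'` give different utilities. -/
def diffStates {A N : Type*} (u : A → N → ℝ) (a a' : A) : Set N :=
  {η | u a η ≠ u a' η}

/-- The infimum (in the extended reals, so that the infimum over the empty set is `+∞`)
of the utility of action `c` over a set `s` of nature states. -/
noncomputable def infOn {A N : Type*} (u : A → N → ℝ) (c : A) (s : Set N) : EReal :=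
  ⨅ η ∈ s, (u c η : EReal)

/-- An action `a` is loss-averse if for every other action `a'`, over the set of nature states
where the two actions' utilities differ, the infimum of `a`'s utility is at least the infimum
of `a'`'s utility. -/
def LossAverse {A N : Type*} (u : A → N → ℝ) (a : A) : Prop :=
  ∀ a' : A, infOn u a' (diffStates u a a') ≤ infOn u a (diffStates u a a')

/-- A combinatorial bid over the item set `M` on the grid `{δ·k : k ∈ ℕ}`: a function from
bundles (subsets of `M`) to grid values, assigning `0` to the empty bundle. -/
structure CombBid (M : Type*) [Fintype M] [DecidableEq M] (δ : ℝ) where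
  val : Finset M → ℝ
  grid : ∀ S : Finset M, ∃ k : ℕ, val S = δ * k
  val_empty : val ∅ = 0

/-- An allocation of the item set `S` among the list of submitted bids `bs`: each bid gets a
(possibly empty) bundle, the bundles being pairwise disjoint with union `S`. -/
structure Alloc {M : Type*} [Fintype M] [DecidableEq M] {δ : ℝ}
    (bs : List (CombBid M δ)) (S : Finset M) where
  bundle : Fin bs.length → Finset M
  disj : ∀ i j, i ≠ j → Disjoint (bundle i) (bundle j)
  cover : Finset.univ.biUnion bundle = S

/-- The observed welfare of an allocation: each submitted bid's value of its own bundle,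
summed over the submitted bids. -/
noncomputable def obsW {M : Type*} [Fintype M] [DecidableEq M] {δ : ℝ}
    {bs : List (CombBid M δ)} {S : Finset M} (α : Alloc bs S) : ℝ :=
  ∑ i : Fin bs.length, (bs.get i).val (α.bundle i)

/-- The maximal observed welfare of an allocation of `S` among the submitted bids `bs`. -/
noncomputable def maxObsW {M : Type*} [Fintype M] [DecidableEq M] {δ : ℝ}
    (bs : List (CombBid M δ)) (S : Finset M) : ℝ :=
  sSup (Set.range fun α : Alloc bs S => obsW α)

/-- An action of an agent: a nonempty finite tuple (list) of combinatorial bids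
(a Sybil attack). -/
abbrev Act (M : Type*) [Fintype M] [DecidableEq M] (δ : ℝ) :=
  {l : List (CombBid M δ) // l ≠ []}

/-- The VCG payment of the `i`-th submitted bid, for a selection rule `select` choosing a
(welfare-maximizing) allocation of all items: the observed welfare of the selected allocation
minus the maximal observed welfare of an allocation of the remaining items `M ∖ αᵢ`. -/
noncomputable def payment {M : Type*} [Fintype M] [DecidableEq M] {δ : ℝ}
    (select : ∀ bs : List (CombBid M δ), bs ≠ [] → Alloc bs Finset.univ)
    (bs : List (CombBid M δ)) (hbs : bs ≠ []) (i : Fin bs.length) : ℝ :=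
  obsW (select bs hbs) - maxObsW bs (Finset.univ \ (select bs hbs).bundle i)

/-- The utility of an agent with valuation `v` submitting the Sybil attack `mine` against the
opposing bids `others`: her value of the union of the bundles allocated to her own bids, minus
the sum of the VCG payments of her own bids. -/
noncomputable def utility {M : Type*} [Fintype M] [DecidableEq M] {δ : ℝ}
    (select : ∀ bs : List (CombBid M δ), bs ≠ [] → Alloc bs Finset.univ)
    (v : Finset M → ℝ) (mine : Act M δ) (others : List (CombBid M δ)) : ℝ :=
  let bs := mine.val ++ others
  let hbs : bs ≠ [] := fun h => mine.prop (List.append_eq_nil_iff.mp h).1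
  let α := select bs hbs
  let mineIdx : Finset (Fin bs.length) :=
    Finset.univ.filter fun i => (i : ℕ) < mine.val.length
  v (mineIdx.biUnion α.bundle) - ∑ i ∈ mineIdx, payment select bs hbs i

/-- The bid grid size: `ε / (2·m!)`. -/
noncomputable def bidGrid (ε : ℝ) (m : ℕ) : ℝ := ε / (2 * (m.factorial : ℝ))


/-- The combined list of all submitted bids: agent `0`'s bids, then agent `1`'s, etc. -/
def allBids {M : Type*} [Fintype M] [DecidableEq M] {δ : ℝ} {n : ℕ}
    (attack : Fin n → Act M δ) : List (CombBid M δ) :=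
  (List.ofFn fun i => (attack i).val).flatten

/-- The position in the combined bid list at which agent `i`'s bids start. -/
def offset {M : Type*} [Fintype M] [DecidableEq M] {δ : ℝ} {n : ℕ}
    (attack : Fin n → Act M δ) (i : ℕ) : ℕ :=
  (((List.ofFn fun j => (attack j).val).take i).map List.length).sum

/-- The union of the bundles allocated to the bids of agent `i`. -/
noncomputable def agentBundle {M : Type*} [Fintype M] [DecidableEq M] {δ : ℝ} {n : ℕ}
    (attack : Fin n → Act M δ) (α : Alloc (allBids attack) Finset.univ) (i : Fin n) :
    Finset M :=
  (Finset.univ.filter fun j : Fin (allBids attack).length =>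
      offset attack i ≤ (j : ℕ) ∧ (j : ℕ) < offset attack ((i : ℕ) + 1)).biUnion α.bundle

/-- The real welfare of an allocation: each agent's true value of the union of the bundles
allocated to her own bids, summed over the agents. -/
noncomputable def realWelfare {M : Type*} [Fintype M] [DecidableEq M] {δ ε : ℝ} {n : ℕ}
    (v : Fin n → CombBid M ε) (attack : Fin n → Act M δ)
    (α : Alloc (allBids attack) Finset.univ) : ℝ :=
  ∑ i : Fin n, (v i).val (agentBundle attack α i)

/-- The optimal welfare: the maximum over partitions `(S_1, …, S_n)` of `M` of
`∑ i, v_i(S_i)`. -/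
noncomputable def optWelfare {M : Type*} [Fintype M] [DecidableEq M] {ε : ℝ} {n : ℕ}
    (v : Fin n → CombBid M ε) : ℝ :=
  sSup {w : ℝ | ∃ P : Fin n → Finset M, (∀ i j, i ≠ j → Disjoint (P i) (P j)) ∧
      Finset.univ.biUnion P = Finset.univ ∧ w = ∑ i : Fin n, (v i).val (P i)}

/-- A Sybil attack `b` of an agent with valuation `v` is exact-bidding if for every bundle
`S`, the maximal total bid value over allocations of `S` among the attack's bids equals
`v(S)`. -/
def ExactBidding {M : Type*} [Fintype M] [DecidableEq M] {δ : ℝ}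
    (v : Finset M → ℝ) (b : Act M δ) : Prop :=
  ∀ S : Finset M, (∀ α : Alloc b.val S, obsW α ≤ v S) ∧ ∃ α : Alloc b.val S, obsW α = v S


namespace SybAux
variable {β : Type*}

def off (ls : List (List β)) (i : ℕ) : ℕ := ((ls.take i).map List.length).sum

@[simp] lemma off_zero (ls : List (List β)) : off ls 0 = 0 := rfl

lemma off_cons_succ (a : List β) (t : List (List β)) (i : ℕ) :
    off (a :: t) (i+1) = a.length + off t i := by
  simp [off, List.take_succ_cons]

lemma off_succ_of_lt (ls : List (List β)) (i : ℕ) (h : i < ls.length) :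
    off ls (i+1) = off ls i + ls[i].length := by
  induction ls generalizing i with
  | nil => simp at h
  | cons a t ih =>
    cases i with
    | zero => simp [off_cons_succ, off]
    | succ i =>
      rw [off_cons_succ, off_cons_succ, ih i (by simpa using h)]
      simp [Nat.add_assoc]

lemma off_le_succ (ls : List (List β)) (i : ℕ) : off ls i ≤ off ls (i+1) := by
  rcases lt_or_ge i ls.length with h | h
  · rw [off_succ_of_lt ls i h]; omega
  · unfold off
    rw [List.take_of_length_le h, List.take_of_length_le (by omega)]

lemma off_mono (ls : List (List β)) : Monotone (off ls) :=
  monotone_nat_of_le_succ (off_le_succ ls)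

lemma off_length (ls : List (List β)) : off ls ls.length = ls.flatten.length := by
  simp [off, List.length_flatten]

lemma off_add_lt (ls : List (List β)) (i k : ℕ) (hi : i < ls.length)
    (hk : k < ls[i].length) : off ls i + k < ls.flatten.length := by
  calc off ls i + k < off ls (i+1) := by rw [off_succ_of_lt ls i hi]; omega
  _ ≤ off ls ls.length := off_mono ls hi
  _ = ls.flatten.length := off_length ls

lemma getElem_flatten_off (ls : List (List β)) (i k : ℕ) (hi : i < ls.length)
    (hk : k < ls[i].length) :
    ls.flatten[off ls i + k]'(off_add_lt ls i k hi hk) = ls[i][k] := by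
  induction ls generalizing i with
  | nil => simp at hi
  | cons a t ih =>
    cases i with
    | zero =>
      simp only [off_zero, Nat.zero_add, List.flatten_cons]
      rw [List.getElem_append_left (by simpa using hk)]
      simp
    | succ i =>
      have hi' : i < t.length := by simpa using hi
      simp only [List.flatten_cons, off_cons_succ]
      simp only [Nat.add_assoc]
      rw [List.getElem_append_right (Nat.le_add_right _ _)]
      simp only [Nat.add_sub_cancel_left]
      exact ih i hi' (by simpa using hk)

lemma exists_decomp (ls : List (List β)) (j : ℕ) (hj : j < ls.flatten.length) :
    ∃ i, i < ls.length ∧ off ls i ≤ j ∧ j < off ls (i+1) := by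
  induction ls generalizing j with
  | nil => simp at hj
  | cons a t ih =>
    rcases lt_or_ge j a.length with h | h
    · exact ⟨0, by simp, by simp, by simpa [off_cons_succ, off] using h⟩
    · have hj' : j - a.length < t.flatten.length := by
        simp only [List.flatten_cons, List.length_append] at hj; omega
      obtain ⟨i, hi, h1, h2⟩ := ih (j - a.length) hj'
      exact ⟨i+1, by simpa using hi, by rw [off_cons_succ]; omega,
        by rw [off_cons_succ]; omega⟩

lemma decomp_unique (ls : List (List β)) {j i i' : ℕ}
    (h1 : off ls i ≤ j) (h2 : j < off ls (i+1))
    (h1' : off ls i' ≤ j) (h2' : j < off ls (i'+1)) : i = i' := by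
  by_contra hne
  rcases Nat.lt_or_ge i i' with h | h
  · have := off_mono ls (show i + 1 ≤ i' by omega); omega
  · have := off_mono ls (show i' + 1 ≤ i by omega); omega

end SybAux

namespace SybProof
open SybAux

variable {M : Type*} [Fintype M] [DecidableEq M] {δ : ℝ} {n : ℕ}

/-- The list of the agents' bid lists. -/
def lls (attack : Fin n → Act M δ) : List (List (CombBid M δ)) :=
  List.ofFn fun i => (attack i).val

variable (attack : Fin n → Act M δ)

lemma offset_eq (i : ℕ) : offset attack i = off (lls attack) i := rfl

@[simp] lemma lls_length : (lls attack).length = n := by simp [lls]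

lemma lls_get (i : Fin n) (h : (i : ℕ) < (lls attack).length) :
    (lls attack)[(i:ℕ)] = (attack i).val := by simp [lls]

lemma allBids_eq : allBids attack = (lls attack).flatten := rfl

lemma allBids_length : (allBids attack).length = off (lls attack) n := by
  rw [allBids_eq, ← off_length, lls_length]

lemma offset_succ (i : Fin n) :
    offset attack ((i:ℕ)+1) = offset attack i + (attack i).val.length := by
  have hi : (i:ℕ) < (lls attack).length := by simp
  rw [offset_eq, offset_eq, off_succ_of_lt _ _ hi, lls_get]

lemma emb_lt (i : Fin n) (k : ℕ) (hk : k < (attack i).val.length) :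
    offset attack i + k < (allBids attack).length := by
  rw [allBids_length]
  have h1 : offset attack i + k < off (lls attack) ((i:ℕ)+1) := by
    rw [← offset_eq, offset_succ]; omega
  exact lt_of_lt_of_le h1 (off_mono _ i.isLt)

/-- The position of agent `i`'s `k`-th bid in the combined bid list. -/
def emb (i : Fin n) (k : Fin (attack i).val.length) : Fin (allBids attack).length :=
  ⟨offset attack i + k, emb_lt attack i k k.isLt⟩

lemma get_emb (i : Fin n) (k : Fin (attack i).val.length) :
    (allBids attack).get (emb attack i k) = (attack i).val.get k := by
  have hi : (i:ℕ) < (lls attack).length := by simp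
  have hk : (k:ℕ) < (lls attack)[(i:ℕ)].length := by rw [lls_get]; exact k.isLt
  have h := getElem_flatten_off (lls attack) i k hi hk
  simp only [List.get_eq_getElem, emb, allBids_eq, offset_eq]
  rw [h]
  congr 1
  exact lls_get attack i hi

/-- The indices of agent `i`'s bids in the combined bid list. -/
def mineIdxF (i : Fin n) : Finset (Fin (allBids attack).length) :=
  Finset.univ.filter fun j => offset attack i ≤ (j : ℕ) ∧ (j : ℕ) < offset attack ((i:ℕ)+1)

lemma agentBundle_eq (α : Alloc (allBids attack) Finset.univ) (i : Fin n) :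
    agentBundle attack α i = (mineIdxF attack i).biUnion α.bundle := rfl

lemma emb_mem (i : Fin n) (k : Fin (attack i).val.length) :
    emb attack i k ∈ mineIdxF attack i := by
  simp only [mineIdxF, Finset.mem_filter, Finset.mem_univ, true_and, emb, offset_succ]
  exact ⟨Nat.le_add_right _ _, by have := k.isLt; omega⟩

lemma mem_mineIdxF_iff (i : Fin n) (j : Fin (allBids attack).length) :
    j ∈ mineIdxF attack i ↔ ∃ k, j = emb attack i k := by
  constructor
  · intro hj
    simp only [mineIdxF, Finset.mem_filter, Finset.mem_univ, true_and, offset_succ] at hj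
    obtain ⟨h1, h2⟩ := hj
    refine ⟨⟨(j:ℕ) - offset attack i, by omega⟩, ?_⟩
    apply Fin.ext
    simp only [emb]
    omega
  · rintro ⟨k, rfl⟩; exact emb_mem attack i k

lemma mineIdxF_eq_image (i : Fin n) :
    mineIdxF attack i = Finset.univ.image (emb attack i) := by
  ext j
  simp [mem_mineIdxF_iff, eq_comm]

lemma emb_val_injective (i : Fin n) : Function.Injective (emb attack i) := by
  intro k k' h
  have := congrArg Fin.val h
  simp only [emb] at this
  exact Fin.ext (by omega)

lemma idx_unique {i i' : Fin n} {j : Fin (allBids attack).length}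
    (h : j ∈ mineIdxF attack i) (h' : j ∈ mineIdxF attack i') : i = i' := by
  simp only [mineIdxF, Finset.mem_filter, Finset.mem_univ, true_and] at h h'
  exact Fin.ext (decomp_unique (lls attack) h.1 h.2 h'.1 h'.2)

lemma exists_idx (j : Fin (allBids attack).length) : ∃ i, j ∈ mineIdxF attack i := by
  have hj : (j:ℕ) < (lls attack).flatten.length := by
    rw [← allBids_eq]; exact j.isLt
  obtain ⟨i, hi, h1, h2⟩ := exists_decomp (lls attack) j hj
  rw [lls_length] at hi
  exact ⟨⟨i, hi⟩, Finset.mem_filter.mpr ⟨Finset.mem_univ _, h1, h2⟩⟩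

lemma univ_biUnion_mineIdxF :
    Finset.univ.biUnion (mineIdxF attack) = (Finset.univ : Finset (Fin (allBids attack).length)) := by
  apply Finset.eq_univ_iff_forall.mpr
  intro j
  obtain ⟨i, hi⟩ := exists_idx attack j
  exact Finset.mem_biUnion.mpr ⟨i, Finset.mem_univ i, hi⟩

lemma mineIdxF_pairwiseDisjoint :
    ((Finset.univ : Finset (Fin n)) : Set (Fin n)).PairwiseDisjoint (mineIdxF attack) := by
  intro i _ i' _ hne
  simp only [Function.onFun]
  rw [Finset.disjoint_left]
  intro j hj hj'
  exact hne (idx_unique attack hj hj')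

lemma sum_partition (f : Fin (allBids attack).length → ℝ) :
    ∑ j, f j = ∑ i : Fin n, ∑ j ∈ mineIdxF attack i, f j := by
  rw [← Finset.sum_biUnion (mineIdxF_pairwiseDisjoint attack), univ_biUnion_mineIdxF]

/-- Restriction of a global allocation to agent `i`'s bids. -/
def restrictAlloc (α : Alloc (allBids attack) Finset.univ) (i : Fin n) :
    Alloc (attack i).val (agentBundle attack α i) where
  bundle k := α.bundle (emb attack i k)
  disj k k' h := α.disj _ _ (fun he => h (emb_val_injective attack i he))
  cover := by
    rw [agentBundle_eq, mineIdxF_eq_image, Finset.image_biUnion]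

lemma obsW_restrict (α : Alloc (allBids attack) Finset.univ) (i : Fin n) :
    obsW (restrictAlloc attack α i)
      = ∑ j ∈ mineIdxF attack i, ((allBids attack).get j).val (α.bundle j) := by
  unfold obsW
  rw [mineIdxF_eq_image, Finset.sum_image (fun k _ k' _ h => emb_val_injective attack i h)]
  refine Finset.sum_congr rfl fun k _ => ?_
  rw [get_emb]
  rfl

lemma obsW_eq_sum_restrict (α : Alloc (allBids attack) Finset.univ) :
    obsW α = ∑ i : Fin n, obsW (restrictAlloc attack α i) := by
  unfold obsW
  rw [sum_partition attack (fun j => ((allBids attack).get j).val (α.bundle j))]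
  exact Finset.sum_congr rfl fun i _ => (obsW_restrict attack α i).symm

lemma exists_sigma (j : Fin (allBids attack).length) :
    ∃ p : Σ i : Fin n, Fin (attack i).val.length, emb attack p.1 p.2 = j := by
  obtain ⟨i, hi⟩ := exists_idx attack j
  obtain ⟨k, hk⟩ := (mem_mineIdxF_iff attack i j).mp hi
  exact ⟨⟨i, k⟩, hk.symm⟩

/-- Decomposition of a global bid index into (agent, local index). -/
noncomputable def dec (j : Fin (allBids attack).length) :
    Σ i : Fin n, Fin (attack i).val.length :=
  (exists_sigma attack j).choose

lemma emb_dec (j : Fin (allBids attack).length) :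
    emb attack (dec attack j).1 (dec attack j).2 = j :=
  (exists_sigma attack j).choose_spec

lemma emb_sigma_injective :
    Function.Injective (fun p : Σ i : Fin n, Fin (attack i).val.length =>
      emb attack p.1 p.2) := by
  rintro ⟨i, k⟩ ⟨i', k'⟩ h
  simp only at h
  have hmem : emb attack i k ∈ mineIdxF attack i := emb_mem attack i k
  have hmem' : emb attack i k ∈ mineIdxF attack i' := h ▸ emb_mem attack i' k'
  obtain rfl : i = i' := idx_unique attack hmem hmem'
  obtain rfl : k = k' := emb_val_injective attack i h
  rfl

lemma dec_emb (i : Fin n) (k : Fin (attack i).val.length) :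
    dec attack (emb attack i k) = ⟨i, k⟩ :=
  emb_sigma_injective attack (emb_dec attack (emb attack i k))

lemma bundle_subset {bs : List (CombBid M δ)} {S : Finset M} (γ : Alloc bs S)
    (k : Fin bs.length) : γ.bundle k ⊆ S := by
  exact (Finset.subset_biUnion_of_mem _ (Finset.mem_univ k)).trans (le_of_eq γ.cover)

lemma bundle_pair_disjoint (P : Fin n → Finset M)
    (hPd : ∀ i j, i ≠ j → Disjoint (P i) (P j))
    (β : ∀ i, Alloc (attack i).val (P i)) :
    ∀ p p' : Σ i : Fin n, Fin (attack i).val.length, p ≠ p' →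
      Disjoint ((β p.1).bundle p.2) ((β p'.1).bundle p'.2) := by
  rintro ⟨i, k⟩ ⟨i', k'⟩ hne
  by_cases hi : i = i'
  · subst hi
    exact (β i).disj k k' fun h => hne (by rw [h])
  · exact (hPd i i' hi).mono (bundle_subset (β i) k) (bundle_subset (β i') k')

/-- Combining per-agent allocations of a partition into a global allocation. -/
noncomputable def combineAlloc (P : Fin n → Finset M)
    (hPd : ∀ i j, i ≠ j → Disjoint (P i) (P j))
    (hPc : Finset.univ.biUnion P = Finset.univ)
    (β : ∀ i, Alloc (attack i).val (P i)) :
    Alloc (allBids attack) Finset.univ where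
  bundle j := (β (dec attack j).1).bundle (dec attack j).2
  disj j j' h := by
    have hd : dec attack j ≠ dec attack j' := fun he => by
      apply h
      rw [← emb_dec attack j, ← emb_dec attack j', he]
    exact bundle_pair_disjoint attack P hPd β _ _ hd
  cover := by
    apply Finset.eq_univ_iff_forall.mpr
    intro m
    have hm : m ∈ Finset.univ.biUnion P := by rw [hPc]; exact Finset.mem_univ m
    obtain ⟨i, _, hmi⟩ := Finset.mem_biUnion.mp hm
    rw [← (β i).cover] at hmi
    obtain ⟨k, _, hmk⟩ := Finset.mem_biUnion.mp hmi
    refine Finset.mem_biUnion.mpr ⟨emb attack i k, Finset.mem_univ _, ?_⟩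
    show m ∈ (β (dec attack (emb attack i k)).1).bundle (dec attack (emb attack i k)).2
    rw [dec_emb]
    exact hmk

lemma combine_bundle_emb (P : Fin n → Finset M)
    (hPd : ∀ i j, i ≠ j → Disjoint (P i) (P j))
    (hPc : Finset.univ.biUnion P = Finset.univ)
    (β : ∀ i, Alloc (attack i).val (P i)) (i : Fin n) (k : Fin (attack i).val.length) :
    (combineAlloc attack P hPd hPc β).bundle (emb attack i k) = (β i).bundle k := by
  show (β (dec attack (emb attack i k)).1).bundle (dec attack (emb attack i k)).2 = _
  rw [dec_emb]

lemma obsW_combine (P : Fin n → Finset M)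
    (hPd : ∀ i j, i ≠ j → Disjoint (P i) (P j))
    (hPc : Finset.univ.biUnion P = Finset.univ)
    (β : ∀ i, Alloc (attack i).val (P i)) :
    obsW (combineAlloc attack P hPd hPc β) = ∑ i : Fin n, obsW (β i) := by
  have hbij : Function.Bijective
      (fun p : Σ i : Fin n, Fin (attack i).val.length => emb attack p.1 p.2) :=
    ⟨emb_sigma_injective attack, fun j => ⟨dec attack j, emb_dec attack j⟩⟩
  calc obsW (combineAlloc attack P hPd hPc β)
      = ∑ j, ((allBids attack).get j).val ((combineAlloc attack P hPd hPc β).bundle j) := rfl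
    _ = ∑ p : Σ i : Fin n, Fin (attack i).val.length,
          ((attack p.1).val.get p.2).val ((β p.1).bundle p.2) := by
        refine (Fintype.sum_bijective _ hbij _ _ ?_).symm
        rintro ⟨i, k⟩
        simp only [get_emb, combine_bundle_emb]
    _ = ∑ i : Fin n, ∑ k : Fin (attack i).val.length,
          ((attack i).val.get k).val ((β i).bundle k) := by
        rw [← Finset.univ_sigma_univ, Finset.sum_sigma]
    _ = ∑ i : Fin n, obsW (β i) := rfl

lemma agentBundle_disjoint (α : Alloc (allBids attack) Finset.univ) :
    ∀ i i', i ≠ i' → Disjoint (agentBundle attack α i) (agentBundle attack α i') := by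
  intro i i' hne
  rw [agentBundle_eq, agentBundle_eq, Finset.disjoint_biUnion_left]
  intro j hj
  rw [Finset.disjoint_biUnion_right]
  intro j' hj'
  exact α.disj j j' fun he => hne (idx_unique attack (he ▸ hj) hj')

lemma agentBundle_cover (α : Alloc (allBids attack) Finset.univ) :
    Finset.univ.biUnion (agentBundle attack α) = Finset.univ := by
  apply Finset.eq_univ_iff_forall.mpr
  intro m
  have hm : m ∈ Finset.univ.biUnion α.bundle := by rw [α.cover]; exact Finset.mem_univ m
  obtain ⟨j, _, hj⟩ := Finset.mem_biUnion.mp hm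
  obtain ⟨i, hi⟩ := exists_idx attack j
  refine Finset.mem_biUnion.mpr ⟨i, Finset.mem_univ i, ?_⟩
  rw [agentBundle_eq]
  exact Finset.mem_biUnion.mpr ⟨j, hi, hj⟩

lemma obsW_le_realWelfare {ε : ℝ} (v : Fin n → CombBid M ε)
    (hex : ∀ i, ExactBidding (v i).val (attack i)) (α : Alloc (allBids attack) Finset.univ) :
    obsW α ≤ realWelfare v attack α := by
  rw [obsW_eq_sum_restrict attack α]
  exact Finset.sum_le_sum fun i _ =>
    ((hex i) (agentBundle attack α i)).1 (restrictAlloc attack α i)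

end SybProof


/-- in the discrete VCG combinatorial auction with false-name bids
(for any welfare-maximizing selection rule whose tie-breaking prefers allocations assigning
larger bundles to single bids), if every agent submits an exact-bidding Sybil attack for her
valuation, then the allocation selected by VCG achieves optimal real welfare. -/
theorem exactBidding_optimal_welfare {M : Type*} [Fintype M] [DecidableEq M]
    (ε : ℝ) (hε : 0 < ε) (hM : 1 ≤ Fintype.card M)
    (select : ∀ bs : List (CombBid M (bidGrid ε (Fintype.card M))), bs ≠ [] →
      Alloc bs Finset.univ)
    (hsel : ∀ (bs : List (CombBid M (bidGrid ε (Fintype.card M)))) (hbs : bs ≠ [])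
      (α : Alloc bs Finset.univ), obsW α ≤ obsW (select bs hbs))
    (htie : ∀ (bs : List (CombBid M (bidGrid ε (Fintype.card M)))) (hbs : bs ≠ [])
      (α : Alloc bs Finset.univ), obsW α = obsW (select bs hbs) →
      ∑ i, (α.bundle i).card ^ 2 ≤ ∑ i, ((select bs hbs).bundle i).card ^ 2)
    (n : ℕ) (hn : 0 < n)
    (v : Fin n → CombBid M ε)
    (attack : Fin n → Act M (bidGrid ε (Fintype.card M)))
    (hex : ∀ i : Fin n, ExactBidding (v i).val (attack i))
    (hbs : allBids attack ≠ []) :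
    realWelfare v attack (select (allBids attack) hbs) = optWelfare v := by
  classical
  open SybProof in
  set α := select (allBids attack) hbs with hα
  set S : Set ℝ := {w : ℝ | ∃ P : Fin n → Finset M, (∀ i j, i ≠ j → Disjoint (P i) (P j)) ∧
      Finset.univ.biUnion P = Finset.univ ∧ w = ∑ i : Fin n, (v i).val (P i)} with hS
  have hBdd : BddAbove S := by
    apply Set.Finite.bddAbove
    apply Set.Finite.subset
      (Set.finite_range fun P : Fin n → Finset M => ∑ i : Fin n, (v i).val (P i))
    rintro w ⟨P, _, _, rfl⟩
    exact ⟨P, rfl⟩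
  have hmemRW : realWelfare v attack α ∈ S :=
    ⟨agentBundle attack α, agentBundle_disjoint attack α, agentBundle_cover attack α, rfl⟩
  have hne : S.Nonempty := by
    refine ⟨∑ i : Fin n, (v i).val (if i = ⟨0, hn⟩ then Finset.univ else ∅),
      fun i => if i = ⟨0, hn⟩ then Finset.univ else ∅, ?_, ?_, rfl⟩
    · intro i j hij
      rcases eq_or_ne i ⟨0, hn⟩ with hi | hi
      · have hj : j ≠ (⟨0, hn⟩ : Fin n) := fun h => hij (hi.trans h.symm)
        simp [hi, hj]
      · simp [hi]
    · apply Finset.eq_univ_iff_forall.mpr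
      intro m
      exact Finset.mem_biUnion.mpr ⟨⟨0, hn⟩, Finset.mem_univ _, by simp⟩
  have hub : ∀ w ∈ S, w ≤ realWelfare v attack α := by
    rintro w ⟨P, hPd, hPc, rfl⟩
    choose β hβ using fun i => (hex i (P i)).2
    calc ∑ i : Fin n, (v i).val (P i) = ∑ i : Fin n, obsW (β i) := by
          exact Finset.sum_congr rfl fun i _ => (hβ i).symm
      _ = obsW (combineAlloc attack P hPd hPc β) := (obsW_combine attack P hPd hPc β).symm
      _ ≤ obsW α := hsel _ hbs _
      _ ≤ realWelfare v attack α := obsW_le_realWelfare attack v hex α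
  have : optWelfare v = sSup S := rfl
  rw [this]
  exact le_antisymm (le_csSup hBdd hmemRW) (csSup_le hne hub)
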